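/- Let p be a prime and let J ∈ ℤ^{s×s} be a single Jordan block with integer eigenvalue λ ≠ 0. Then the sequence n ↦ ν_p(J^{n+1}) − ν_p(J^n) is periodic. -/

import Mathlib

open Finset

/-- The `p`-adic valuation of a nonzero integer matrix: the minimum of the `p`-adic
valuations of its nonzero entries. -/
noncomputable def matPadicVal (p : ℕ) {a b : Type*} [Fintype a] [Fintype b]
    (M : Matrix a b ℤ) : ℕ :=
  sInf {v : ℕ | ∃ i j, M i j ≠ 0 ∧ padicValInt p (M i j) = v}

/-- A single `s × s` Jordan block with eigenvalue `λ`. -/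
def jordanBlock (s : ℕ) (lam : ℤ) : Matrix (Fin s) (Fin s) ℤ :=
  fun i j => if i = j then lam else if (i : ℕ) + 1 = (j : ℕ) then 1 else 0

def shiftN (s : ℕ) : Matrix (Fin s) (Fin s) ℤ :=
  fun i j => if (i : ℕ) + 1 = (j : ℕ) then 1 else 0

lemma shiftN_pow (s m : ℕ) (i j : Fin s) :
    ((shiftN s) ^ m) i j = if (i : ℕ) + m = (j : ℕ) then 1 else 0 := by
  induction m generalizing i j with
  | zero =>
    simp [Matrix.one_apply, Fin.ext_iff]
  | succ m ih =>
    rw [pow_succ, Matrix.mul_apply]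
    by_cases h : (i : ℕ) + (m + 1) = (j : ℕ)
    · have hj : 1 ≤ (j : ℕ) := by omega
      have hx : (i : ℕ) + m < s := by omega
      rw [Finset.sum_eq_single ⟨(i:ℕ)+m, hx⟩]
      · simp [ih, shiftN, h]; omega
      · intro b _ hb
        rcases eq_or_ne ((i:ℕ) + m) (b : ℕ) with hb' | hb'
        · exact absurd (by apply Fin.ext; simpa using hb'.symm) hb
        · simp [ih, hb']
      · simp
    · simp only [h, if_false]
      apply Finset.sum_eq_zero
      intro b _
      rcases eq_or_ne ((i:ℕ) + m) (b : ℕ) with hb' | hb'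
      · simp [shiftN, ih, ← hb']; omega
      · simp [ih, hb']

lemma jordan_eq (s : ℕ) (lam : ℤ) :
    jordanBlock s lam = lam • (1 : Matrix (Fin s) (Fin s) ℤ) + shiftN s := by
  funext a b
  by_cases h : a = b
  · subst h
    simp only [jordanBlock, shiftN, Matrix.add_apply, Matrix.smul_apply, Matrix.one_apply,
      if_pos rfl, smul_eq_mul, mul_one]
    have : ¬((a : ℕ) + 1 = (a : ℕ)) := by omega
    rw [if_neg this, add_zero]
    simp
  · simp only [jordanBlock, shiftN, Matrix.add_apply, Matrix.smul_apply, Matrix.one_apply,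
      if_neg h, smul_eq_mul, mul_zero, zero_add]

lemma jordan_pow_sum (s : ℕ) (lam : ℤ) (n : ℕ) :
    (jordanBlock s lam) ^ n =
      ∑ k ∈ Finset.range (n + 1), (lam ^ k * (n.choose k : ℤ)) • (shiftN s) ^ (n - k) := by
  have hc : Commute (lam • (1 : Matrix (Fin s) (Fin s) ℤ)) (shiftN s) :=
    (Commute.one_left (shiftN s)).smul_left lam
  rw [jordan_eq, hc.add_pow]
  refine Finset.sum_congr rfl fun k hk => ?_
  rw [smul_pow, one_pow, smul_mul_assoc, one_mul, smul_mul_assoc, mul_smul,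
    Nat.cast_smul_eq_nsmul, ← (Nat.cast_commute (n.choose k) ((shiftN s) ^ (n - k))).eq,
    ← nsmul_eq_mul]

lemma jordan_pow_apply (s : ℕ) (lam : ℤ) (n : ℕ) (i j : Fin s) :
    ((jordanBlock s lam) ^ n) i j =
      if (i : ℕ) ≤ (j : ℕ) then
        (n.choose ((j : ℕ) - (i : ℕ)) : ℤ) * lam ^ (n - ((j : ℕ) - (i : ℕ)))
      else 0 := by
  rw [jordan_pow_sum]
  rw [Matrix.sum_apply]
  simp only [Matrix.smul_apply, shiftN_pow, smul_eq_mul]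
  by_cases hij : (i : ℕ) ≤ (j : ℕ) ∧ (j : ℕ) - (i : ℕ) ≤ n
  · obtain ⟨h1, h2⟩ := hij
    rw [Finset.sum_eq_single (n - ((j : ℕ) - (i : ℕ)))]
    · rw [if_pos (by omega), if_pos h1, mul_one]
      rw [Nat.choose_symm h2, mul_comm]
    · intro k hk hkne
      simp only [Finset.mem_range] at hk
      rw [if_neg (by omega), mul_zero]
    · intro h
      exact absurd (Finset.mem_range.mpr (by omega)) h
  · have hz : ∀ k ∈ Finset.range (n + 1),
        lam ^ k * (n.choose k : ℤ) * (if (i : ℕ) + (n - k) = (j : ℕ) then 1 else 0) = 0 := by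
      intro k hk
      simp only [Finset.mem_range] at hk
      rw [if_neg (by omega), mul_zero]
    rw [Finset.sum_eq_zero hz]
    by_cases h1 : (i : ℕ) ≤ (j : ℕ)
    · rw [if_pos h1, Nat.choose_eq_zero_of_lt (by omega), Nat.cast_zero, zero_mul]
    · rw [if_neg h1]

section Helpers

variable {p : ℕ}

lemma padicValNat_le_of_dvd [Fact p.Prime] {a b : ℕ} (hab : a ∣ b) (hb : b ≠ 0) :
    padicValNat p a ≤ padicValNat p b := by
  rw [← padicValNat_dvd_iff_le hb]
  exact dvd_trans pow_padicValNat_dvd hab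

lemma padicValNat_stable [Fact p.Prime] {a T L : ℕ} (ha : a ≠ 0) (hT : p ^ L ∣ T)
    (h : padicValNat p a < L) : padicValNat p (a + T) = padicValNat p a := by
  set w := padicValNat p a with hw
  have h1 : p ^ w ∣ a := pow_padicValNat_dvd
  have h2 : p ^ w ∣ T := dvd_trans (pow_dvd_pow p h.le) hT
  have h3 : ¬ p ^ (w + 1) ∣ a := pow_succ_padicValNat_not_dvd ha
  have h4 : p ^ (w + 1) ∣ T := dvd_trans (pow_dvd_pow p h) hT
  have haT : a + T ≠ 0 := by positivity
  have h5 : p ^ w ∣ a + T := Dvd.dvd.add h1 h2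
  have h6 : ¬ p ^ (w + 1) ∣ a + T := fun hd => h3 (by
    have := Nat.dvd_sub hd h4
    simpa using this)
  have l1 : w ≤ padicValNat p (a + T) := (padicValNat_dvd_iff_le haT).mp h5
  have l2 : ¬ (w + 1 ≤ padicValNat p (a + T)) := fun hc => h6 ((padicValNat_dvd_iff_le haT).mpr hc)
  omega

lemma padicValNat_prod_range [Fact p.Prime] (k : ℕ) (f : ℕ → ℕ) (hf : ∀ j < k, f j ≠ 0) :
    padicValNat p (∏ j ∈ range k, f j) = ∑ j ∈ range k, padicValNat p (f j) := by
  induction k with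
  | zero => simp
  | succ k ih =>
    rw [prod_range_succ, sum_range_succ,
      padicValNat.mul (Finset.prod_ne_zero_iff.mpr fun j hj => hf j (by
        simp only [mem_range] at hj; omega)) (hf k (by omega)),
      ih (fun j hj => hf j (by omega))]

lemma padicValNat_choose_sum [Fact p.Prime] {n k : ℕ} (hk : k ≤ n) :
    padicValNat p (k.factorial) + padicValNat p (n.choose k) =
      ∑ j ∈ range k, padicValNat p (n - j) := by
  rw [← padicValNat.mul (Nat.factorial_ne_zero k) (Nat.choose_pos hk).ne',
    ← Nat.descFactorial_eq_factorial_mul_choose, Nat.descFactorial_eq_prod_range,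
    padicValNat_prod_range k _ (fun j hj => by omega)]

lemma padicValInt_pow [Fact p.Prime] {lam : ℤ} (hlam : lam ≠ 0) (m : ℕ) :
    padicValInt p (lam ^ m) = m * padicValInt p lam := by
  induction m with
  | zero => simp [padicValInt]
  | succ m ih =>
    rw [pow_succ, padicValInt.mul (pow_ne_zero _ hlam) hlam, ih]
    ring

end Helpers

/-- valuation of a `k ≤ n` entry of `J^n`. -/
noncomputable def Hfun (p : ℕ) (lam : ℤ) (a k : ℕ) : ℕ :=
  padicValNat p (a.choose k) + (a - k) * padicValInt p lam

lemma matPadicVal_jordan (p : ℕ) [Fact p.Prime] (s : ℕ) (hs : 0 < s) (lam : ℤ)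
    (hlam : lam ≠ 0) (n : ℕ) :
    matPadicVal p ((jordanBlock s lam) ^ n) =
      sInf {w : ℕ | ∃ k, k ≤ min n (s - 1) ∧ Hfun p lam n k = w} := by
  unfold matPadicVal
  congr 1
  ext w
  constructor
  · rintro ⟨i, j, hne, hval⟩
    rw [jordan_pow_apply] at hne hval
    by_cases hij : (i : ℕ) ≤ (j : ℕ)
    · rw [if_pos hij] at hne hval
      have hkn : (j : ℕ) - (i : ℕ) ≤ n := by
        by_contra hgt
        rw [Nat.choose_eq_zero_of_lt (by omega)] at hne
        simp at hne
      refine ⟨(j : ℕ) - (i : ℕ), ⟨by have := j.isLt; omega, ?_⟩⟩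
      rw [← hval, Hfun, padicValInt.mul
        (Int.natCast_ne_zero.mpr (Nat.choose_pos hkn).ne') (pow_ne_zero _ hlam),
        padicValInt.of_nat, padicValInt_pow hlam]
    · rw [if_neg hij] at hne
      exact absurd rfl hne
  · rintro ⟨k, hk, rfl⟩
    have hks : k < s := by omega
    have hkn : k ≤ n := by omega
    refine ⟨⟨0, hs⟩, ⟨k, hks⟩, ?_, ?_⟩
    · rw [jordan_pow_apply]
      simp only [Fin.val_mk, Nat.zero_le, if_pos, Nat.sub_zero]
      exact mul_ne_zero (Int.natCast_ne_zero.mpr (Nat.choose_pos hkn).ne') (pow_ne_zero _ hlam)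
    · rw [jordan_pow_apply]
      simp only [Fin.val_mk, Nat.zero_le, if_pos, Nat.sub_zero]
      rw [Hfun, padicValInt.mul
        (Int.natCast_ne_zero.mpr (Nat.choose_pos hkn).ne') (pow_ne_zero _ hlam),
        padicValInt.of_nat, padicValInt_pow hlam]

lemma jordan_key (p : ℕ) (hp : p.Prime) (s : ℕ) (hs : 0 < s) (lam : ℤ) (hlam : lam ≠ 0) :
    ∃ T : ℕ, 1 ≤ T ∧ ∀ n : ℕ,
      matPadicVal p ((jordanBlock s lam) ^ (n + T)) =
        matPadicVal p ((jordanBlock s lam) ^ n) + T * padicValInt p lam := by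
  haveI : Fact p.Prime := ⟨hp⟩
  set v := padicValInt p lam with hv
  set V := padicValNat p (s.factorial) with hV
  set L := s * v + V + s + 1 with hL
  set T := s * p ^ L with hT
  have hpL : 0 < p ^ L := Nat.pow_pos hp.pos
  have hTs : s ≤ T := Nat.le_mul_of_pos_right s hpL
  have hT1 : 1 ≤ T := le_trans hs hTs
  have hdvd : p ^ L ∣ T := Dvd.intro_left s rfl
  refine ⟨T, hT1, fun n => ?_⟩
  rw [matPadicVal_jordan p s hs lam hlam, matPadicVal_jordan p s hs lam hlam]
  have hmin : min (n + T) (s - 1) = s - 1 := by omega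
  -- Claim: good k transfer
  have good : ∀ k, k ≤ n → k ≤ s - 1 → (∀ j, j < k → padicValNat p (n - j) < L) →
      Hfun p lam (n + T) k = Hfun p lam n k + T * v := by
    intro k hkn hks hgood
    have hsum : ∑ j ∈ range k, padicValNat p ((n + T) - j) =
        ∑ j ∈ range k, padicValNat p (n - j) := by
      refine Finset.sum_congr rfl fun j hj => ?_
      have hj' : j < k := mem_range.mp hj
      have he : (n + T) - j = (n - j) + T := by omega
      rw [he, padicValNat_stable (by omega) hdvd (hgood j hj')]
    have e1 := padicValNat_choose_sum (p := p) (n := n) (k := k) hkn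
    have e2 := padicValNat_choose_sum (p := p) (n := n + T) (k := k) (by omega)
    rw [hsum] at e2
    have hcc : padicValNat p ((n + T).choose k) = padicValNat p (n.choose k) := by omega
    unfold Hfun
    rw [hcc]
    have he : (n + T) - k = (n - k) + T := by omega
    rw [he, add_mul]
    ring
  -- Claim: bad k bound
  have badBound : ∀ k, k ≤ s - 1 → ∀ a, k ≤ a →
      (∃ j, j < k ∧ L ≤ padicValNat p (a - j)) → a * v < Hfun p lam a k := by
    rintro k hks a hka ⟨j, hj, hLj⟩
    have hSig : L ≤ ∑ j' ∈ range k, padicValNat p (a - j') :=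
      le_trans hLj (Finset.single_le_sum (f := fun j' => padicValNat p (a - j'))
        (fun _ _ => Nat.zero_le _) (mem_range.mpr hj))
    have e := padicValNat_choose_sum (p := p) (n := a) (k := k) hka
    have hkfac : padicValNat p (k.factorial) ≤ V :=
      padicValNat_le_of_dvd (Nat.factorial_dvd_factorial (by omega : k ≤ s))
        (Nat.factorial_ne_zero s)
    have hvc : s * v + s + 1 ≤ padicValNat p (a.choose k) := by omega
    have hkv : k * v ≤ s * v := Nat.mul_le_mul_right v (by omega)
    have hsplit : a * v = (a - k) * v + k * v := by
      rw [← add_mul]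
      congr 1
      omega
    unfold Hfun
    rw [← hv]
    omega
  have hSn_ne : (n * v) ∈ {w : ℕ | ∃ k, k ≤ min n (s - 1) ∧ Hfun p lam n k = w} :=
    ⟨0, Nat.zero_le _, by simp [Hfun, padicValNat.one, hv]⟩
  have hSnT_ne : ((n + T) * v) ∈
      {w : ℕ | ∃ k, k ≤ min (n + T) (s - 1) ∧ Hfun p lam (n + T) k = w} :=
    ⟨0, Nat.zero_le _, by simp [Hfun, padicValNat.one, hv]⟩
  apply le_antisymm
  · -- ≤ : use the minimizer at n
    obtain ⟨k, hk, hH⟩ := Nat.sInf_mem ⟨n * v, hSn_ne⟩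
    have hle : sInf {w : ℕ | ∃ k, k ≤ min n (s - 1) ∧ Hfun p lam n k = w} ≤ n * v :=
      Nat.sInf_le hSn_ne
    have hkn : k ≤ n := le_trans hk (min_le_left _ _)
    have hks : k ≤ s - 1 := le_trans hk (min_le_right _ _)
    have hgood : ∀ j, j < k → padicValNat p (n - j) < L := by
      by_contra hc
      push_neg at hc
      obtain ⟨j, hj, hLj⟩ := hc
      have := badBound k hks n hkn ⟨j, hj, hLj⟩
      omega
    have hg := good k hkn hks hgood
    refine le_trans (Nat.sInf_le ⟨k, by omega, hg⟩) (by omega)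
  · -- ≥ : use the minimizer at n+T
    obtain ⟨k, hk, hH⟩ := Nat.sInf_mem ⟨(n + T) * v, hSnT_ne⟩
    have hle : sInf {w : ℕ | ∃ k, k ≤ min (n + T) (s - 1) ∧ Hfun p lam (n + T) k = w} ≤
        (n + T) * v := Nat.sInf_le hSnT_ne
    have hks : k ≤ s - 1 := le_trans hk (min_le_right _ _)
    have hkn : k ≤ n := by
      by_contra hc
      push_neg at hc
      have hbad : ∃ j, j < k ∧ L ≤ padicValNat p ((n + T) - j) := by
        refine ⟨n, hc, ?_⟩
        have he : (n + T) - n = T := by omega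
        rw [he]
        exact (padicValNat_dvd_iff_le (by omega : T ≠ 0)).mp hdvd
      have := badBound k hks (n + T) (by omega) hbad
      omega
    have hgood : ∀ j, j < k → padicValNat p (n - j) < L := by
      by_contra hc
      push_neg at hc
      obtain ⟨j, hj, hLj⟩ := hc
      have hbad : ∃ j, j < k ∧ L ≤ padicValNat p ((n + T) - j) := by
        refine ⟨j, hj, ?_⟩
        have h1 : p ^ L ∣ (n - j) := (padicValNat_dvd_iff_le (by omega)).mpr hLj
        have h2 : p ^ L ∣ ((n + T) - j) := by
          have he : (n + T) - j = (n - j) + T := by omega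
          rw [he]
          exact h1.add hdvd
        exact (padicValNat_dvd_iff_le (by omega)).mp h2
      have := badBound k hks (n + T) (by omega) hbad
      omega
    have hg := good k hkn hks hgood
    have hfn : sInf {w : ℕ | ∃ k, k ≤ min n (s - 1) ∧ Hfun p lam n k = w} ≤ Hfun p lam n k :=
      Nat.sInf_le ⟨k, by omega, rfl⟩
    omega

/-- For a single Jordan block `J` with nonzero integer eigenvalue, the sequence
`n ↦ ν_p(J^{n+1}) - ν_p(J^n)` is periodic. -/
theorem matPadicVal_jordanBlock_diff_periodic (p : ℕ) (hp : p.Prime) (s : ℕ)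
    (hs : 0 < s) (lam : ℤ) (hlam : lam ≠ 0) :
    ∃ T : ℕ, 1 ≤ T ∧ ∀ n : ℕ,
      (matPadicVal p ((jordanBlock s lam) ^ (n + T + 1)) : ℤ) -
          matPadicVal p ((jordanBlock s lam) ^ (n + T)) =
        (matPadicVal p ((jordanBlock s lam) ^ (n + 1)) : ℤ) -
          matPadicVal p ((jordanBlock s lam) ^ n) := by
  obtain ⟨T, hT1, hT⟩ := jordan_key p hp s hs lam hlam
  refine ⟨T, hT1, fun n => ?_⟩
  have h1 := hT n
  have h2 := hT (n + 1)
  have he : n + 1 + T = n + T + 1 := by omega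
  rw [he] at h2
  rw [h1, h2]
  push_cast
  ring
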